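/- arXiv:2101.03058 — 3 statements merged into one kernel-verified Lean document; each statement's English description precedes it below -/
import Mathlib

section
/- Let Σ be a schema and S a finite set of TGDs over Σ that are both guarded and full. Then for every finite Σ-instance D and every conjunctive query q(x̄) over Σ: q(ch_S(D)) = ch_S(q)(ch_S(D)), where ch_S(D) is the least superset of D satisfying every TGD in S, and ch_S(q) is the CQ with answer variables x̄ obtained by chasing the canonical database D_q of q with S and re-adding the equality atoms of q. -/
namespace DB

/-- A relational schema: a finite set of relation symbols with arities. -/
structure Schema where
  Rel : Type
  ar : Rel → ℕ
  relFinite : Finite Rel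

/-- A fact over a schema `S` with constants from `C`. -/
abbrev Fact (S : Schema) (C : Type) : Type := (R : S.Rel) × (Fin (S.ar R) → C)

/-- An instance over schema `S` with constants from `C`: a set of facts. -/
abbrev Inst (S : Schema) (C : Type) : Type := Set (Fact S C)

/-- The active domain of an instance: the constants occurring in its facts. -/
def adom {S : Schema} {C : Type} (I : Inst S C) : Set C :=
  {c | ∃ f ∈ I, ∃ i, f.2 i = c}

/-- A tuple-generating dependency `∀x̄∀ȳ (φ(x̄,ȳ) → ∃z̄ ψ(x̄,z̄))`:
`X` are the frontier variables, `Y` the body-only variables, `Z` the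
existential head variables; body and head are conjunctions (sets) of atoms. -/
structure TGD (S : Schema) where
  X : Type
  Y : Type
  Z : Type
  finX : Finite X
  finY : Finite Y
  finZ : Finite Z
  body : Set (Fact S (X ⊕ Y))
  head : Set (Fact S (X ⊕ Z))

/-- Satisfaction of a TGD by an instance: every assignment making all body
atoms facts of the instance extends to one making all head atoms facts. -/
def tgdSat {S : Schema} {C : Type} (I : Inst S C) (T : TGD S) : Prop :=
  ∀ (a : T.X → C) (b : T.Y → C),
    (∀ A ∈ T.body, (⟨A.1, Sum.elim a b ∘ A.2⟩ : Fact S C) ∈ I) →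
    ∃ c : T.Z → C, ∀ A ∈ T.head, (⟨A.1, Sum.elim a c ∘ A.2⟩ : Fact S C) ∈ I

/-- A TGD is full if it has no existential head variables. -/
def TGD.IsFull {S : Schema} (T : TGD S) : Prop := IsEmpty T.Z

/-- A TGD is guarded if its body is `true` (empty) or contains an atom
mentioning all variables occurring in the body. -/
def TGD.IsGuarded {S : Schema} (T : TGD S) : Prop :=
  T.body = ∅ ∨ ∃ G ∈ T.body, ∀ v : T.X ⊕ T.Y,
    (∃ A ∈ T.body, ∃ i, A.2 i = v) → ∃ i, G.2 i = v

/-- An instance satisfies every TGD of a set. -/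
def satAll {S : Schema} {C : Type} (I : Inst S C) (Ω : Set (TGD S)) : Prop :=
  ∀ T ∈ Ω, tgdSat I T

/-- `chD` is the result of chasing `D` with `Ω`: the least superset of `D`
satisfying every TGD in `Ω`. -/
def IsChase {S : Schema} {C : Type} (Ω : Set (TGD S)) (D chD : Inst S C) : Prop :=
  D ⊆ chD ∧ satAll chD Ω ∧ ∀ J : Inst S C, D ⊆ J → satAll J Ω → chD ⊆ J

/-- The chase of `D` with `Ω`, as the intersection of all supersets of `D`
satisfying every TGD in `Ω`. -/
def chase {S : Schema} {C : Type} (Ω : Set (TGD S)) (D : Inst S C) : Inst S C :=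
  ⋂₀ {J : Inst S C | D ⊆ J ∧ satAll J Ω}

/-- A conjunctive query with `n` answer variables: quantified variables `V`,
a set of relational atoms over the variables `Fin n ⊕ V`, and equality atoms
between answer variables. -/
structure CQ (S : Schema) (n : ℕ) where
  V : Type
  finV : Finite V
  atoms : Set (Fact S (Fin n ⊕ V))
  eqs : Set (Fin n × Fin n)

/-- The canonical database of a CQ: its relational atoms, variables read as
constants. -/
def canonDB {S : Schema} {n : ℕ} (q : CQ S n) : Inst S (Fin n ⊕ q.V) := q.atoms

/-- A homomorphism from a CQ to an instance: a map from the variables into the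
active domain sending every relational atom to a fact and respecting the
equality atoms. -/
def IsHom {S : Schema} {C : Type} {n : ℕ} (q : CQ S n) (I : Inst S C)
    (h : Fin n ⊕ q.V → C) : Prop :=
  (∀ v, h v ∈ adom I) ∧
  (∀ A ∈ q.atoms, (⟨A.1, h ∘ A.2⟩ : Fact S C) ∈ I) ∧
  (∀ e ∈ q.eqs, h (Sum.inl e.1) = h (Sum.inl e.2))

/-- The answer set of a CQ on an instance. -/
def answers {S : Schema} {C : Type} {n : ℕ} (q : CQ S n) (I : Inst S C) :
    Set (Fin n → C) :=
  {t | ∃ h, IsHom q I h ∧ t = h ∘ Sum.inl}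

/-- The chase of a CQ with a set of TGDs: chase the canonical database and
read the facts back as atoms, keeping answer variables and equality atoms. -/
def chaseCQ {S : Schema} {n : ℕ} (Ω : Set (TGD S)) (q : CQ S n) : CQ S n :=
  ⟨q.V, q.finV, chase Ω (canonDB q), q.eqs⟩

/-- The direct product of two instances. -/
def prodInst {S : Schema} {C₁ C₂ : Type} (I₁ : Inst S C₁) (I₂ : Inst S C₂) :
    Inst S (C₁ × C₂) :=
  {f | (⟨f.1, fun i => (f.2 i).1⟩ : Fact S C₁) ∈ I₁ ∧
       (⟨f.1, fun i => (f.2 i).2⟩ : Fact S C₂) ∈ I₂}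

/-- `f'` is obtained from the fact `f` by replacing each occurrence of a
chosen constant `c` by a clone `κ c j` with `1 ≤ j ≤ m c` (occurrences are
replaced independently), other constants being kept. -/
def CloneFact {S : Schema} {C : Type} (chosen : Set C) (m : C → ℕ) (κ : C → ℕ → C)
    (f f' : Fact S C) : Prop :=
  ∃ t' : Fin (S.ar f.1) → C, f' = ⟨f.1, t'⟩ ∧
    ∀ i, (f.2 i ∉ chosen ∧ t' i = f.2 i) ∨
         (f.2 i ∈ chosen ∧ ∃ j, 1 ≤ j ∧ j ≤ m (f.2 i) ∧ t' i = κ (f.2 i) j)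

/-- `I'` is obtained from `I` by cloning constants: choose finitely many
constants of `adom I`, positive numbers of clones, fresh pairwise distinct
clone constants, and add all atoms obtained from atoms of `I` by replacing
each occurrence of each chosen constant by one of its clones. -/
def IsCloneOf {S : Schema} {C : Type} (I I' : Inst S C) : Prop :=
  ∃ (chosen : Set C) (m : C → ℕ) (κ : C → ℕ → C),
    chosen.Finite ∧ chosen ⊆ adom I ∧ (∀ c ∈ chosen, 1 ≤ m c) ∧
    (∀ c ∈ chosen, ∀ j, 1 ≤ j → j ≤ m c → κ c j ∉ adom I) ∧
    (∀ c ∈ chosen, ∀ c' ∈ chosen, ∀ j j', 1 ≤ j → j ≤ m c → 1 ≤ j' → j' ≤ m c' →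
      κ c j = κ c' j' → c = c' ∧ j = j') ∧
    I' = I ∪ {f' | ∃ f ∈ I, CloneFact chosen m κ f f'}

/-- The instance obtained from `D` by cloning every constant of `F` exactly
`m` times, with clone constants given by `κ`. -/
def cloneBy {S : Schema} {C : Type} (F : Set C) (m : ℕ) (κ : C → ℕ → C)
    (D : Inst S C) : Inst S C :=
  D ∪ {f' | ∃ f ∈ D, CloneFact F (fun _ => m) κ f f'}

/-- A constant is an `F`-copy if it belongs to `F` or is one of the first `m`
clones of a constant of `F`. -/
def IsFCopy {C : Type} (F : Set C) (m : ℕ) (κ : C → ℕ → C) (c : C) : Prop :=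
  c ∈ F ∨ ∃ c₀ ∈ F, ∃ j, 1 ≤ j ∧ j ≤ m ∧ c = κ c₀ j


theorem statement5 (S : Schema) (Ω : Set (TGD S)) (hΩfin : Ω.Finite)
    (hg : ∀ T ∈ Ω, T.IsGuarded) (hfull : ∀ T ∈ Ω, T.IsFull)
    (C : Type) (D : Inst S C) (hD : D.Finite)
    (chD : Inst S C) (hchD : IsChase Ω D chD)
    (n : ℕ) (q : CQ S n)
    (chAtoms : Inst S (Fin n ⊕ q.V)) (hchq : IsChase Ω (canonDB q) chAtoms) :
    answers q chD = answers (CQ.mk q.V q.finV chAtoms q.eqs) chD := by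
  apply Set.eq_of_subset_of_subset
  · rintro t ⟨h, ⟨hadom, hat, heq⟩, rfl⟩
    -- pullback instance
    set J : Inst S (Fin n ⊕ q.V) := {A | (⟨A.1, h ∘ A.2⟩ : Fact S C) ∈ chD} with hJ
    have hsub : canonDB q ⊆ J := fun A hA => hat A hA
    have hsat : satAll J Ω := by
      intro T hT a b hbody
      have hZ : IsEmpty T.Z := hfull T hT
      obtain ⟨c, hc⟩ := hchD.2.1 T hT (h ∘ Sum.elim a b ∘ Sum.inl)
        (h ∘ Sum.elim a b ∘ Sum.inr) (by
          intro A hA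
          have := hbody A hA
          have heq2 : (Sum.elim (h ∘ Sum.elim a b ∘ Sum.inl)
              (h ∘ Sum.elim a b ∘ Sum.inr) ∘ A.2) = h ∘ (Sum.elim a b ∘ A.2) := by
            funext i; cases hx : A.2 i <;> simp [hx]
          rw [heq2]; exact this)
      refine ⟨fun z => hZ.elim z, ?_⟩
      intro A hA
      have := hc A hA
      show (⟨A.1, h ∘ (Sum.elim a (fun z => hZ.elim z) ∘ A.2)⟩ : Fact S C) ∈ chD
      have heq3 : h ∘ (Sum.elim a (fun z => hZ.elim z) ∘ A.2) =
          Sum.elim (h ∘ Sum.elim a b ∘ Sum.inl) c ∘ A.2 := by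
        funext i
        cases hx : A.2 i with
        | inl x => simp [hx]
        | inr z => exact hZ.elim z
      rw [heq3]; exact this
    have hch : chAtoms ⊆ J := hchq.2.2 J hsub hsat
    exact ⟨h, ⟨hadom, fun A hA => hch hA, heq⟩, rfl⟩
  · rintro t ⟨h, ⟨hadom, hat, heq⟩, rfl⟩
    exact ⟨h, ⟨hadom, fun A hA => hat A (hchq.1 hA), heq⟩, rfl⟩

end DB
end

section
/- Let Σ be a schema and T a guarded TGD over Σ. If a Σ-instance I satisfies T and I' is obtained from I by cloning constants, then I' satisfies T. -/
namespace DB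

theorem statement9 (S : Schema) (T : TGD S) (hg : T.IsGuarded) (C : Type)
    (I I' : Inst S C) (hI : tgdSat I T) (hclone : IsCloneOf I I') :
    tgdSat I' T := by
  classical
  obtain ⟨chosen, m, κ, hfin, hsub, hm, hfresh, hinj, hI'⟩ := hclone
  have hsubI : I ⊆ I' := hI' ▸ Set.subset_union_left
  set isCl : C → Prop := fun x => ∃ c, c ∈ chosen ∧ ∃ j, 1 ≤ j ∧ j ≤ m c ∧ x = κ c j
    with hisCl
  set ρ : C → C := fun x => if h : isCl x then h.choose else x with hρ
  have hρ_nc : ∀ x, ¬ isCl x → ρ x = x := fun x h => dif_neg h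
  have hρ_adom : ∀ x ∈ adom I, ρ x = x := by
    intro x hx
    refine hρ_nc x ?_
    rintro ⟨c, hc, j, hj1, hj2, rfl⟩
    exact hfresh c hc j hj1 hj2 hx
  have hρ_cl : ∀ c ∈ chosen, ∀ j, 1 ≤ j → j ≤ m c → ρ (κ c j) = c := by
    intro c hc j hj1 hj2
    have h : isCl (κ c j) := ⟨c, hc, j, hj1, hj2, rfl⟩
    have he : ρ (κ c j) = h.choose := dif_pos h
    rw [he]
    obtain ⟨hc', j', hj1', hj2', heq⟩ := h.choose_spec
    exact ((hinj c hc h.choose hc' j j' hj1 hj2 hj1' hj2' heq).1).symm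
  have hunclone : ∀ f ∈ I', (⟨f.1, ρ ∘ f.2⟩ : Fact S C) ∈ I := by
    intro f hf
    rw [hI'] at hf
    rcases hf with hf | ⟨g, hg', t', hft, hpt⟩
    · have heq : ρ ∘ f.2 = f.2 := by
        funext i; exact hρ_adom _ ⟨f, hf, i, rfl⟩
      rw [heq]; exact hf
    · subst hft
      have heq : ρ ∘ t' = g.2 := by
        funext i
        show ρ (t' i) = g.2 i
        rcases hpt i with ⟨hnc, ht⟩ | ⟨hc, j, hj1, hj2, ht⟩
        · rw [ht]; exact hρ_adom _ ⟨g, hg', i, rfl⟩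
        · rw [ht]; exact hρ_cl _ hc j hj1 hj2
      show (⟨g.1, ρ ∘ t'⟩ : Fact S C) ∈ I
      rw [heq]; exact hg'
  intro a b hbody
  rcases hg with hempty | ⟨G, hG, hguard⟩
  · obtain ⟨c, hc⟩ := hI a b (by
      intro A hA; rw [hempty] at hA; exact absurd hA (Set.notMem_empty A))
    exact ⟨c, fun A hA => hsubI (hc A hA)⟩
  · have hFG := hbody G hG
    rw [hI'] at hFG
    rcases hFG with hFG | ⟨g, hg', t', hft, hpt⟩
    · -- the guard fact is in I : all body facts are in I
      have hb : ∀ A ∈ T.body, (⟨A.1, Sum.elim a b ∘ A.2⟩ : Fact S C) ∈ I := by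
        intro A hA
        have hval : ∀ i, Sum.elim a b (A.2 i) ∈ adom I := by
          intro i
          obtain ⟨i', hi'⟩ := hguard (A.2 i) ⟨A, hA, i, rfl⟩
          refine ⟨⟨G.1, Sum.elim a b ∘ G.2⟩, hFG, i', ?_⟩
          show Sum.elim a b (G.2 i') = _
          rw [hi']
        have h1 : (⟨A.1, ρ ∘ (Sum.elim a b ∘ A.2)⟩ : Fact S C) ∈ I :=
          hunclone _ (hbody A hA)
        have heq : ρ ∘ (Sum.elim a b ∘ A.2) = Sum.elim a b ∘ A.2 := by
          funext i; exact hρ_adom _ (hval i)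
        rwa [heq] at h1
      obtain ⟨c, hc⟩ := hI a b hb
      exact ⟨c, fun A hA => hsubI (hc A hA)⟩
    · -- the guard fact is a clone of g ∈ I
      obtain ⟨gR, gt⟩ := g
      obtain ⟨GR, Gt⟩ := G
      injection hft with h1 h2
      subst h1
      have h2' : Sum.elim a b ∘ Gt = t' := eq_of_heq h2
      have key : ∀ v, (∃ B ∈ T.body, ∃ i, B.2 i = v) →
          Sum.elim a b v ∉ chosen ∨ isCl (Sum.elim a b v) := by
        intro v hv
        obtain ⟨i', hi'⟩ := hguard v hv
        have hval : Sum.elim a b v = t' i' := by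
          rw [← hi']; exact congrFun h2' i'
        rcases hpt i' with ⟨hnc, ht⟩ | ⟨hch, j, hj1, hj2, ht⟩
        · left; rw [hval, ht]; exact hnc
        · right; rw [hval, ht]; exact ⟨gt i', hch, j, hj1, hj2, rfl⟩
      have hbody'' : ∀ A ∈ T.body,
          (⟨A.1, Sum.elim (ρ ∘ a) (ρ ∘ b) ∘ A.2⟩ : Fact S C) ∈ I := by
        intro A hA
        have h1 : (⟨A.1, ρ ∘ (Sum.elim a b ∘ A.2)⟩ : Fact S C) ∈ I :=
          hunclone _ (hbody A hA)
        have heq : Sum.elim (ρ ∘ a) (ρ ∘ b) ∘ A.2 = ρ ∘ (Sum.elim a b ∘ A.2) := by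
          funext i
          show Sum.elim (ρ ∘ a) (ρ ∘ b) (A.2 i) = ρ (Sum.elim a b (A.2 i))
          rcases hv : A.2 i with x | y <;> simp [hv]
        rw [heq]; exact h1
      obtain ⟨c₀, hc₀⟩ := hI (ρ ∘ a) (ρ ∘ b) hbody''
      by_cases hbadx : ∃ x, (∃ A ∈ T.head, ∃ i, A.2 i = Sum.inl x) ∧
          a x ∈ chosen ∧ ¬ isCl (a x)
      · -- impossible: plugging a fresh clone for x gives a fact of I with a
        -- fresh constant
        exfalso
        obtain ⟨x, ⟨A, hA, i, hAi⟩, hxch, hxncl⟩ := hbadx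
        have hnocc : ¬ ∃ B ∈ T.body, ∃ i, B.2 i = Sum.inl x := by
          intro hocc
          rcases key _ hocc with h | h
          · exact h hxch
          · exact hxncl h
        obtain ⟨c₁, hc₁⟩ := hI (fun x' => if x' = x then κ (a x) 1 else ρ (a x'))
          (ρ ∘ b) (by
          intro B hB
          have heq : Sum.elim (fun x' => if x' = x then κ (a x) 1 else ρ (a x'))
              (ρ ∘ b) ∘ B.2 = Sum.elim (ρ ∘ a) (ρ ∘ b) ∘ B.2 := by
            funext i'
            show Sum.elim (fun x' => if x' = x then κ (a x) 1 else ρ (a x'))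
                (ρ ∘ b) (B.2 i') = Sum.elim (ρ ∘ a) (ρ ∘ b) (B.2 i')
            rcases hBi : B.2 i' with x' | y'
            · have hne : x' ≠ x := fun h => hnocc ⟨B, hB, i', by rw [hBi, h]⟩
              simp [hne]
            · simp
          rw [heq]; exact hbody'' B hB)
        have hfact := hc₁ A hA
        have hval : κ (a x) 1 ∈ adom I := by
          refine ⟨_, hfact, i, ?_⟩
          show Sum.elim _ c₁ (A.2 i) = _
          rw [hAi]
          show (if x = x then κ (a x) 1 else ρ (a x)) = _
          rw [if_pos rfl]
        exact hfresh (a x) hxch 1 le_rfl (hm _ hxch) hval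
      · push_neg at hbadx
        set cz : T.Z → C := fun z => if c₀ z ∈ chosen then κ (c₀ z) 1 else c₀ z
          with hcz
        refine ⟨cz, ?_⟩
        intro A hA
        rw [hI']
        refine Set.mem_union_right _
          ⟨⟨A.1, Sum.elim (ρ ∘ a) c₀ ∘ A.2⟩, hc₀ A hA,
           Sum.elim a cz ∘ A.2, rfl, ?_⟩
        intro i
        show (Sum.elim (ρ ∘ a) c₀ (A.2 i) ∉ chosen ∧
              Sum.elim a cz (A.2 i) = Sum.elim (ρ ∘ a) c₀ (A.2 i)) ∨
             (Sum.elim (ρ ∘ a) c₀ (A.2 i) ∈ chosen ∧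
              ∃ j, 1 ≤ j ∧ j ≤ m (Sum.elim (ρ ∘ a) c₀ (A.2 i)) ∧
                Sum.elim a cz (A.2 i) = κ (Sum.elim (ρ ∘ a) c₀ (A.2 i)) j)
        rcases hAi : A.2 i with x | z
        · by_cases hcl : isCl (a x)
          · obtain ⟨c0, hc0, j, hj1, hj2, hxe⟩ := hcl
            have hρx : ρ (a x) = c0 := by rw [hxe]; exact hρ_cl c0 hc0 j hj1 hj2
            right
            refine ⟨?_, j, hj1, ?_, ?_⟩
            · show ρ (a x) ∈ chosen; rw [hρx]; exact hc0
            · show j ≤ m (ρ (a x)); rw [hρx]; exact hj2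
            · show a x = κ (ρ (a x)) j; rw [hρx, ← hxe]
          · have hρx : ρ (a x) = a x := hρ_nc _ hcl
            by_cases hch : a x ∈ chosen
            · exact absurd (hbadx x ⟨A, hA, i, hAi⟩ hch) hcl
            · left
              refine ⟨?_, ?_⟩
              · show ρ (a x) ∉ chosen; rw [hρx]; exact hch
              · show a x = ρ (a x); rw [hρx]
        · by_cases hch : c₀ z ∈ chosen
          · right
            refine ⟨hch, 1, le_rfl, hm _ hch, ?_⟩
            show cz z = κ (c₀ z) 1
            rw [hcz]; exact if_pos hch
          · left
            refine ⟨hch, ?_⟩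
            show cz z = c₀ z
            rw [hcz]; exact if_neg hch

end DB
end

section
/- Let Σ be a schema, p(x̄) an equality-free conjunctive query over Σ, and D a finite Σ-instance. Let p⋆ be the marking of p, obtained by adding to p an atom R_x(x) for each variable x of p, where the R_x are fresh pairwise distinct unary relation symbols. Let P = D_p × D be the direct product of the canonical database of p with D, and let P⋆ = P ∪ { R_x((x,a)) : x a variable of p, a ∈ adom(D) }. Then the answer set of p⋆ on P⋆ is exactly { x̄ × ā : ā ∈ p(D) }, where x̄ × ā denotes the tuple ((x₁,a₁),…,(xₙ,aₙ)) for x̄ = x₁⋯xₙ and ā = a₁⋯aₙ. In particular, #p⋆(P⋆) = #p(D). -/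
namespace DB

/-- The schema extended with a fresh unary marking relation for every
variable of the CQ `p`. -/
def markSchema (S : Schema) (n : ℕ) (p : CQ S n) : Schema where
  Rel := S.Rel ⊕ (Fin n ⊕ p.V)
  ar := Sum.elim S.ar fun _ => 1
  relFinite := by
    haveI := S.relFinite
    haveI := p.finV
    infer_instance

/-- The marking of a CQ: add the atom `R_x(x)` for every variable `x`. -/
def markCQ (S : Schema) (n : ℕ) (p : CQ S n) : CQ (markSchema S n p) n where
  V := p.V
  finV := p.finV
  atoms := {A : Fact (markSchema S n p) (Fin n ⊕ p.V) |
    (∃ B ∈ p.atoms, A = ⟨Sum.inl B.1, B.2⟩) ∨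
    (∃ v : Fin n ⊕ p.V, A = ⟨Sum.inr v, fun _ => v⟩)}
  eqs := p.eqs

/-- An instance over `S`, viewed over the marking-extended schema. -/
def liftInst {S : Schema} {n : ℕ} (p : CQ S n) {C : Type} (I : Inst S C) :
    Inst (markSchema S n p) C :=
  {f | ∃ g ∈ I, f = ⟨Sum.inl g.1, g.2⟩}

theorem statement15 (S : Schema) (n : ℕ) (p : CQ S n) (heq : p.eqs = ∅)
    (C : Type) (D : Inst S C) (hD : D.Finite) :
    answers (markCQ S n p)
        (liftInst p (prodInst (canonDB p) D) ∪
          {f | ∃ v : Fin n ⊕ p.V, ∃ a ∈ adom D, f = ⟨Sum.inr v, fun _ => (v, a)⟩})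
      = (fun t : Fin n → C =>
          fun i => ((Sum.inl i : Fin n ⊕ p.V), t i)) '' answers p D
    ∧ (answers (markCQ S n p)
        (liftInst p (prodInst (canonDB p) D) ∪
          {f | ∃ v : Fin n ⊕ p.V, ∃ a ∈ adom D, f = ⟨Sum.inr v, fun _ => (v, a)⟩})).ncard
      = (answers p D).ncard := by
  have hinj : Function.Injective
      (fun t : Fin n → C => fun i => ((Sum.inl i : Fin n ⊕ p.V), t i)) := by
    intro t1 t2 hEq
    funext i
    exact congrArg Prod.snd (congrFun hEq i)
  have hset : answers (markCQ S n p)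
        (liftInst p (prodInst (canonDB p) D) ∪
          {f | ∃ v : Fin n ⊕ p.V, ∃ a ∈ adom D, f = ⟨Sum.inr v, fun _ => (v, a)⟩})
      = (fun t : Fin n → C =>
          fun i => ((Sum.inl i : Fin n ⊕ p.V), t i)) '' answers p D := by
    ext t
    constructor
    · rintro ⟨h, ⟨hadom, hatoms, -⟩, rfl⟩
      -- every variable is mapped to (v, a) with a ∈ adom D
      have hmark : ∀ v : Fin n ⊕ p.V, (h v).1 = v ∧ (h v).2 ∈ adom D := by
        intro v
        have hA : (⟨Sum.inr v, fun _ => v⟩ : Fact (markSchema S n p) (Fin n ⊕ p.V))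
            ∈ (markCQ S n p).atoms := Or.inr ⟨v, rfl⟩
        rcases hatoms _ hA with ⟨g, hg, hgeq⟩ | ⟨v', a, ha, hEq⟩
        · exact absurd (congrArg Sigma.fst hgeq) (by simp)
        · injection hEq with h1 h2
          cases Sum.inr.inj h1
          have h3 := congrFun (h2) (⟨0, Nat.zero_lt_one⟩ :
            Fin ((markSchema S n p).ar (Sum.inr v)))
          simp only [Function.comp] at h3
          rw [h3]
          exact ⟨rfl, ha⟩
      set g : Fin n ⊕ p.V → C := fun v => (h v).2 with hg
      have hgh : ∀ v, h v = (v, g v) := by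
        intro v
        have := (hmark v).1
        rw [hg]
        exact Prod.ext this rfl
      refine ⟨g ∘ Sum.inl, ⟨g, ⟨fun v => (hmark v).2, ?_, by simp [heq]⟩, rfl⟩, ?_⟩
      · intro B hB
        have hA : (⟨Sum.inl B.1, B.2⟩ : Fact (markSchema S n p) (Fin n ⊕ p.V))
            ∈ (markCQ S n p).atoms := Or.inl ⟨B, hB, rfl⟩
        rcases hatoms _ hA with ⟨g', hg', hgeq⟩ | ⟨v', a, ha, hEq⟩
        · injection hgeq with h1 h2
          have h1' : B.1 = g'.1 := Sum.inl.inj h1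
          rcases g' with ⟨R', t'⟩
          cases h1'
          rcases hg' with ⟨-, hg2⟩
          convert hg2 using 2
          funext i
          exact congrArg Prod.snd (congrFun (eq_of_heq h2) i)
        · exact absurd (congrArg Sigma.fst hEq) (by simp)
      · funext i
        exact (hgh (Sum.inl i)).symm
    · rintro ⟨t0, ⟨g, ⟨gadom, gatoms, -⟩, rfl⟩, rfl⟩
      refine ⟨fun v => (v, g v), ⟨?_, ?_, ?_⟩, rfl⟩
      · intro v
        refine ⟨⟨Sum.inr v, fun _ => (v, g v)⟩, Or.inr ⟨v, g v, gadom v, rfl⟩,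
          ⟨0, Nat.zero_lt_one⟩, rfl⟩
      · rintro A (⟨B, hB, rfl⟩ | ⟨v, rfl⟩)
        · refine Or.inl ⟨⟨B.1, fun i => (B.2 i, g (B.2 i))⟩, ⟨?_, ?_⟩, rfl⟩
          · exact hB
          · exact gatoms B hB
        · exact Or.inr ⟨v, g v, gadom v, rfl⟩
      · intro e he
        simp only [markCQ, heq] at he
        exact absurd he (Set.notMem_empty e)
  exact ⟨hset, by rw [hset, Set.ncard_image_of_injective _ hinj]⟩

end DB
end
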